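/- Let H be a Hilbert space and φ a bounded finite potent endomorphism with AST-decomposition H = W_φ ⊕ U_φ and index i(φ) ≥ 1. Then the spectrum of φ equals {0} ∪ {eigenvalues of φ|_{W_φ}}. If i(φ) = 0 (i.e., H is finite-dimensional and φ is an automorphism), the spectrum equals the set of eigenvalues of φ|_{W_φ}. -/

import Mathlib

open Function

/-- Bijectivity on a direct sum decomposition into invariant subspaces is equivalent to
bijectivity of both restrictions. -/
lemma bijective_iff_restricts {H : Type*} [AddCommGroup H] [Module ℂ H]
    (W U : Submodule ℂ H) (hWU : IsCompl W U) (f : H →ₗ[ℂ] H)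
    (hW : ∀ x ∈ W, f x ∈ W) (hU : ∀ x ∈ U, f x ∈ U) :
    Function.Bijective f ↔
      Function.Bijective (f.restrict hW) ∧ Function.Bijective (f.restrict hU) := by
  set e := Submodule.prodEquivOfIsCompl W U hWU
  have key : ⇑f ∘ ⇑e = ⇑e ∘ Prod.map ⇑(f.restrict hW) ⇑(f.restrict hU) := by
    funext p
    obtain ⟨w, u⟩ := p
    simp only [Function.comp_apply, Prod.map_apply, e,
      Submodule.coe_prodEquivOfIsCompl', map_add]
    rfl
  have h1 : Function.Bijective f ↔ Function.Bijective (⇑f ∘ ⇑e) :=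
    (Function.Bijective.of_comp_iff ⇑f e.bijective).symm
  rw [h1, key, Function.Bijective.of_comp_iff' e.bijective, Prod.map_bijective]

/-- The spectrum of a bounded finite potent endomorphism `φ` with AST-decomposition
`H = W ⊕ U` is `{0} ∪ {eigenvalues of φ|_W}` when `i(φ) ≥ 1` (i.e. `U ≠ ⊥`), and is
the set of eigenvalues of `φ|_W` when `i(φ) = 0` (i.e. `U = ⊥`). -/
theorem spectrum_of_finite_potent {H : Type*} [NormedAddCommGroup H]
    [InnerProductSpace ℂ H] [CompleteSpace H]
    (φ : H →L[ℂ] H)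
    (W U : Submodule ℂ H) (hWU : IsCompl W U) [FiniteDimensional ℂ W]
    (hW : ∀ x ∈ W, φ.toLinearMap x ∈ W) (hU : ∀ x ∈ U, φ.toLinearMap x ∈ U)
    (hWa : Function.Bijective (φ.toLinearMap.restrict hW))
    (hUn : IsNilpotent (φ.toLinearMap.restrict hU)) :
    (U ≠ ⊥ → spectrum ℂ φ =
      insert (0 : ℂ) {μ : ℂ | Module.End.HasEigenvalue (φ.toLinearMap.restrict hW) μ}) ∧
    (U = ⊥ → spectrum ℂ φ =
      {μ : ℂ | Module.End.HasEigenvalue (φ.toLinearMap.restrict hW) μ}) := by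
  -- Main pointwise characterization
  have main : ∀ μ : ℂ, μ ∈ spectrum ℂ φ ↔
      ((μ = 0 ∧ U ≠ ⊥) ∨ Module.End.HasEigenvalue (φ.toLinearMap.restrict hW) μ) := by
    intro μ
    -- the shifted operator
    set g : H →ₗ[ℂ] H := μ • LinearMap.id - φ.toLinearMap with hg
    have hgW : ∀ x ∈ W, g x ∈ W := fun x hx => by
      simpa [hg] using W.sub_mem (W.smul_mem μ hx) (hW x hx)
    have hgU : ∀ x ∈ U, g x ∈ U := fun x hx => by
      simpa [hg] using U.sub_mem (U.smul_mem μ hx) (hU x hx)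
    have hspec : μ ∈ spectrum ℂ φ ↔ ¬ Function.Bijective g := by
      rw [spectrum.mem_iff, ContinuousLinearMap.isUnit_iff_bijective]
      have : ⇑(algebraMap ℂ (H →L[ℂ] H) μ - φ) = ⇑g := by
        funext x; simp [hg, ContinuousLinearMap.algebraMap_apply]
      rw [this]
    have hrW : g.restrict hgW = μ • LinearMap.id - φ.toLinearMap.restrict hW := by
      ext ⟨x, hx⟩
      simp [hg, LinearMap.restrict_apply]
    have hrU : g.restrict hgU = μ • LinearMap.id - φ.toLinearMap.restrict hU := by
      ext ⟨x, hx⟩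
      simp [hg, LinearMap.restrict_apply]
    have hdecomp := bijective_iff_restricts W U hWU g hgW hgU
    -- W part
    have hWpart : ¬ Function.Bijective (g.restrict hgW) ↔
        Module.End.HasEigenvalue (φ.toLinearMap.restrict hW) μ := by
      rw [Module.End.hasEigenvalue_iff_mem_spectrum, spectrum.mem_iff,
        ← Module.End.isUnit_iff, hrW, Module.algebraMap_end_eq_smul_id]
    -- U part
    have hUpart : ¬ Function.Bijective (g.restrict hgU) ↔ (μ = 0 ∧ U ≠ ⊥) := by
      rw [← Module.End.isUnit_iff, hrU]
      constructor
      · intro h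
        constructor
        · by_contra hμ
          apply h
          have hunit : IsUnit (μ • (LinearMap.id : Module.End ℂ U)) := by
            rw [← Module.algebraMap_end_eq_smul_id]
            exact (isUnit_iff_ne_zero.2 hμ).map (algebraMap ℂ (Module.End ℂ U))
          have := (hUn.neg).isUnit_add_left_of_commute hunit (by
            rw [← Module.algebraMap_end_eq_smul_id]
            exact Algebra.commute_algebraMap_right μ _)
          simpa [sub_eq_add_neg] using this
        · rintro rfl
          apply h
          refine (Module.End.isUnit_iff _).2 ?_
          exact ⟨fun a b _ => Subsingleton.elim a b, fun y => ⟨y, Subsingleton.elim _ _⟩⟩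
      · rintro ⟨rfl, hUne⟩ h
        rw [zero_smul, zero_sub] at h
        have h' : IsUnit (φ.toLinearMap.restrict hU) := by simpa using h.neg
        have hbij := (Module.End.isUnit_iff _).1 h'
        have hbijn : ∀ m : ℕ, Function.Bijective ((φ.toLinearMap.restrict hU) ^ m) := by
          intro m
          induction m with
          | zero => rw [pow_zero, Module.End.coe_one]; exact Function.bijective_id
          | succ k ih =>
            rw [pow_succ, Module.End.mul_eq_comp, LinearMap.coe_comp]
            exact Function.Bijective.comp ih hbij
        obtain ⟨n, hn⟩ := hUn
        have hbijz : Function.Bijective (0 : Module.End ℂ U) := by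
          rw [← hn]; exact hbijn n
        obtain ⟨u, hu, hune⟩ := Submodule.exists_mem_ne_zero_of_ne_bot hUne
        have h0 : (⟨u, hu⟩ : U) = (0 : U) :=
          hbijz.1 (show (0 : Module.End ℂ U) ⟨u, hu⟩ = (0 : Module.End ℂ U) 0 by simp)
        exact hune (by simpa using congrArg Subtype.val h0)
    rw [hspec, hdecomp, not_and_or, hWpart, hUpart, or_comm]
  constructor
  · intro hUne
    ext μ
    rw [Set.mem_insert_iff, main μ]
    simp only [Set.mem_setOf_eq]
    constructor
    · rintro (⟨rfl, -⟩ | h)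
      · exact Or.inl rfl
      · exact Or.inr h
    · rintro (rfl | h)
      · exact Or.inl ⟨rfl, hUne⟩
      · exact Or.inr h
  · intro hUbot
    ext μ
    rw [main μ]
    simp [hUbot]
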